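/- Let f : E → ℝ be differentiable, convex, and L-smooth with L > 0, let g : E → ℝ be convex and continuous, let 0 < λ ≤ 1/L, and let x* ∈ E be a global minimizer of F = f + g. Let x_k ∈ E and let x_{k+1} be a global minimizer over y ∈ E of y ↦ (1/(2λ))·‖y - (x_k - λ·∇f(x_k))‖² + g(y). Then F(x_{k+1}) - F(x*) ≤ (1/(2λ))·(‖x_k - x*‖² - ‖x_{k+1} - x*‖²). -/

import Mathlib

open RealInnerProductSpace Topology Filter Set

private lemma line_hasDerivAt {E : Type*} [NormedAddCommGroup E]
    [InnerProductSpace ℝ E] [CompleteSpace E]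
    (f : E → ℝ) (f' : E → E) (hdiff : ∀ x, HasGradientAt f (f' x) x)
    (x v : E) (t : ℝ) :
    HasDerivAt (fun s : ℝ => f (x + s • v)) ⟪f' (x + t • v), v⟫ t := by
  have h1 : HasDerivAt (fun s : ℝ => x + s • v) v t := by
    simpa using ((hasDerivAt_id t).smul_const v).const_add x
  have h2 := (hdiff (x + t • v)).hasFDerivAt.comp_hasDerivAt t h1
  simp at h2
  exact h2

private lemma convex_grad_ineq {E : Type*} [NormedAddCommGroup E]
    [InnerProductSpace ℝ E] [CompleteSpace E]
    (f : E → ℝ) (f' : E → E) (hdiff : ∀ x, HasGradientAt f (f' x) x)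
    (hfconv : ConvexOn ℝ Set.univ f) (x y : E) :
    f x + ⟪f' x, y - x⟫ ≤ f y := by
  set v := y - x with hv
  have hline := line_hasDerivAt f f' hdiff x v 0
  rw [hasDerivAt_iff_tendsto_slope] at hline
  have hmono : 𝓝[>] (0:ℝ) ≤ 𝓝[≠] (0:ℝ) :=
    nhdsWithin_mono 0 (fun t ht => ne_of_gt ht)
  have hslope : Filter.Tendsto (slope (fun s : ℝ => f (x + s • v)) 0) (𝓝[>] 0)
      (𝓝 ⟪f' (x + (0:ℝ) • v), v⟫) := hline.mono_left hmono
  have hbound : ∀ᶠ t in 𝓝[>] (0:ℝ),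
      slope (fun s : ℝ => f (x + s • v)) 0 t ≤ f y - f x := by
    filter_upwards [Ioc_mem_nhdsGT_of_mem (Set.mem_Ico.2 ⟨le_refl 0, zero_lt_one⟩)]
      with t ht
    obtain ⟨ht0, ht1⟩ := ht
    have hc := hfconv.2 (Set.mem_univ x) (Set.mem_univ y)
      (by linarith : (0:ℝ) ≤ 1 - t) ht0.le (by ring)
    have hpt : x + t • v = (1 - t) • x + t • y := by
      rw [hv]; rw [smul_sub, sub_smul]; module
    have h2 : f (x + t • v) ≤ (1 - t) * f x + t * f y := by rw [hpt]; exact hc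
    rw [slope_def_field, div_le_iff₀ (by simpa using ht0)]
    simp only [zero_smul, add_zero, sub_zero]
    nlinarith
  have := le_of_tendsto hslope hbound
  simp only [zero_smul, add_zero] at this
  linarith

private lemma descent_lemma {E : Type*} [NormedAddCommGroup E]
    [InnerProductSpace ℝ E] [CompleteSpace E]
    (f : E → ℝ) (f' : E → E) (L : ℝ) (hL : 0 < L)
    (hdiff : ∀ x, HasGradientAt f (f' x) x)
    (hsmooth : ∀ x y, ‖f' x - f' y‖ ≤ L * ‖x - y‖) (x y : E) :
    f y ≤ f x + ⟪f' x, y - x⟫ + L / 2 * ‖y - x‖ ^ 2 := by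
  set v := y - x with hv
  have hcontf' : Continuous f' := by
    have : LipschitzWith (Real.toNNReal L) f' := by
      apply LipschitzWith.of_dist_le_mul
      intro a b
      simpa [dist_eq_norm, Real.coe_toNNReal L hL.le] using hsmooth a b
    exact this.continuous
  have hcont : Continuous fun t : ℝ => ⟪f' (x + t • v), v⟫ :=
    Continuous.inner (hcontf'.comp (by continuity)) continuous_const
  have hFTC : ∫ t in (0:ℝ)..1, ⟪f' (x + t • v), v⟫
      = f (x + (1:ℝ) • v) - f (x + (0:ℝ) • v) :=
    intervalIntegral.integral_eq_sub_of_hasDerivAt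
      (fun t _ => line_hasDerivAt f f' hdiff x v t) (hcont.intervalIntegrable 0 1)
  have hbound : ∫ t in (0:ℝ)..1, ⟪f' (x + t • v), v⟫
      ≤ ∫ t in (0:ℝ)..1, (⟪f' x, v⟫ + L * ‖v‖ ^ 2 * t) := by
    apply intervalIntegral.integral_mono_on (by norm_num)
      (hcont.intervalIntegrable 0 1)
      ((by continuity : Continuous fun t : ℝ =>
        (⟪f' x, v⟫ + L * ‖v‖ ^ 2 * t)).intervalIntegrable 0 1)
    intro t ht
    have h1 : ⟪f' (x + t • v), v⟫ - ⟪f' x, v⟫ = ⟪f' (x + t • v) - f' x, v⟫ := by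
      rw [inner_sub_left]
    have h2 : ⟪f' (x + t • v) - f' x, v⟫ ≤ ‖f' (x + t • v) - f' x‖ * ‖v‖ :=
      real_inner_le_norm _ _
    have h3 : ‖f' (x + t • v) - f' x‖ ≤ L * ‖t • v‖ := by
      simpa using hsmooth (x + t • v) x
    have h4 : ‖t • v‖ = t * ‖v‖ := by
      rw [norm_smul, Real.norm_eq_abs, abs_of_nonneg ht.1]
    have h5 := mul_le_mul_of_nonneg_right h3 (norm_nonneg v)
    rw [h4] at h5
    have h6 : L * (t * ‖v‖) * ‖v‖ = L * ‖v‖ ^ 2 * t := by ring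
    linarith
  have hrhs : ∫ t in (0:ℝ)..1, (⟪f' x, v⟫ + L * ‖v‖ ^ 2 * t)
      = ⟪f' x, v⟫ + L * ‖v‖ ^ 2 / 2 := by
    rw [intervalIntegral.integral_add (intervalIntegrable_const)
        (Continuous.intervalIntegrable (by continuity) 0 1),
      intervalIntegral.integral_const, intervalIntegral.integral_const_mul,
      integral_id]
    simp only [smul_eq_mul]; ring
  have hy : x + (1:ℝ) • v = y := by rw [hv]; simp
  rw [hy] at hFTC
  simp only [zero_smul, add_zero] at hFTC
  nlinarith [hFTC, hbound, hrhs]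

private lemma prox_subgrad {E : Type*} [NormedAddCommGroup E]
    [InnerProductSpace ℝ E]
    (g : E → ℝ) (hgconv : ConvexOn ℝ Set.univ g)
    (lam : ℝ) (hlam : 0 < lam) (u z : E)
    (hprox : ∀ y : E, (1 / (2 * lam)) * ‖z - u‖ ^ 2 + g z ≤
      (1 / (2 * lam)) * ‖y - u‖ ^ 2 + g y)
    (y : E) : g z + (1 / lam) * ⟪u - z, y - z⟫ ≤ g y := by
  set A : ℝ := g y - g z - (1 / lam) * ⟪u - z, y - z⟫ with hA
  set B : ℝ := (1 / (2 * lam)) * ‖y - z‖ ^ 2 with hB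
  have key : ∀ t : ℝ, t ∈ Set.Ioc (0:ℝ) 1 → 0 ≤ A + t * B := by
    intro t ⟨ht0, ht1⟩
    have hp := hprox (z + t • (y - z))
    have hcvx : g (z + t • (y - z)) ≤ (1 - t) * g z + t * g y := by
      have hpt : z + t • (y - z) = (1 - t) • z + t • y := by
        rw [smul_sub, sub_smul]; module
      rw [hpt]
      exact hgconv.2 (Set.mem_univ z) (Set.mem_univ y) (by linarith) ht0.le (by ring)
    have hnorm : ‖z + t • (y - z) - u‖ ^ 2
        = ‖z - u‖ ^ 2 + 2 * (t * ⟪z - u, y - z⟫) + t ^ 2 * ‖y - z‖ ^ 2 := by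
      have h1 : z + t • (y - z) - u = (z - u) + t • (y - z) := by abel
      rw [h1, norm_add_sq_real, real_inner_smul_right, norm_smul,
        Real.norm_eq_abs, abs_of_nonneg ht0.le, mul_pow]
      try ring
    have hinner : ⟪z - u, y - z⟫ = - ⟪u - z, y - z⟫ := by
      rw [← neg_sub u z, inner_neg_left]
    have hc : 0 < 1 / (2 * lam) := by positivity
    -- from hp, hcvx, hnorm:
    -- 0 ≤ (1/(2lam)) * (2 t ⟪z-u,y-z⟫ + t² ‖y-z‖²) + t (g y - g z)
    have h2 : 0 ≤ (1 / (2 * lam)) * (2 * (t * ⟪z - u, y - z⟫) + t ^ 2 * ‖y - z‖ ^ 2)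
        + t * (g y - g z) := by nlinarith [hp, hcvx, hnorm]
    have heq : t * (A + t * B) = (1 / (2 * lam)) * (2 * (t * ⟪z - u, y - z⟫)
        + t ^ 2 * ‖y - z‖ ^ 2) + t * (g y - g z) := by
      rw [hA, hB, hinner]; field_simp; ring
    have h3 : 0 ≤ t * (A + t * B) := heq ▸ h2
    nlinarith [h3, ht0]
  -- limit as t → 0⁺
  have htend : Filter.Tendsto (fun t : ℝ => A + t * B) (𝓝[>] (0:ℝ)) (𝓝 (A + 0 * B)) :=
    ((continuous_const.add (continuous_id.mul continuous_const)).tendsto 0).mono_left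
      nhdsWithin_le_nhds
  have h0 : 0 ≤ A + 0 * B := by
    refine ge_of_tendsto htend ?_
    filter_upwards [Ioc_mem_nhdsGT_of_mem (Set.mem_Ico.2 ⟨le_refl 0, zero_lt_one⟩)]
      with t ht using key t ht
  simp only [zero_mul, add_zero] at h0
  rw [hA] at h0
  linarith

theorem prox_gd_one_step_gap_bound {E : Type*} [NormedAddCommGroup E]
    [InnerProductSpace ℝ E] [CompleteSpace E]
    (f g : E → ℝ) (f' : E → E) (L : ℝ) (hL : 0 < L)
    (hdiff : ∀ x, HasGradientAt f (f' x) x)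
    (hfconv : ConvexOn ℝ Set.univ f)
    (hsmooth : ∀ x y, ‖f' x - f' y‖ ≤ L * ‖x - y‖)
    (hgconv : ConvexOn ℝ Set.univ g) (hgcont : Continuous g)
    (lam : ℝ) (hlam : 0 < lam) (hlamL : lam ≤ 1 / L)
    (F : E → ℝ) (hF : F = fun y => f y + g y)
    (xstar : E) (hmin : ∀ y, F xstar ≤ F y)
    (xk xk1 : E)
    (hprox : ∀ y : E,
      (1 / (2 * lam)) * ‖xk1 - (xk - lam • f' xk)‖ ^ 2 + g xk1 ≤
        (1 / (2 * lam)) * ‖y - (xk - lam • f' xk)‖ ^ 2 + g y) :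
    F xk1 - F xstar ≤
      (1 / (2 * lam)) * (‖xk - xstar‖ ^ 2 - ‖xk1 - xstar‖ ^ 2) := by
  set c : ℝ := 1 / (2 * lam) with hc
  set a : ℝ := ⟪f' xk, xk1 - xk⟫ with ha
  set b : ℝ := ⟪f' xk, xstar - xk⟫ with hb
  set q : ℝ := ⟪xk - xk1, xstar - xk1⟫ with hq
  -- descent lemma
  have hdes := descent_lemma f f' L hL hdiff hsmooth xk xk1
  have hL2 : L / 2 ≤ c := by
    rw [hc, div_le_div_iff₀ two_pos (by positivity)]
    rw [le_div_iff₀ hL] at hlamL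
    nlinarith
  have hdes' : f xk1 ≤ f xk + a + c * ‖xk - xk1‖ ^ 2 := by
    have hnn : (0:ℝ) ≤ ‖xk - xk1‖ ^ 2 := sq_nonneg _
    have := mul_le_mul_of_nonneg_right hL2 hnn
    rw [norm_sub_rev xk1 xk] at hdes
    linarith
  -- convexity of f
  have hcvx := convex_grad_ineq f f' hdiff hfconv xk xstar
  -- prox subgradient inequality
  have hsub := prox_subgrad g hgconv lam hlam (xk - lam • f' xk) xk1
    (fun y => hprox y) xstar
  have h1 : ⟪xk - lam • f' xk - xk1, xstar - xk1⟫
      = q - lam * ⟪f' xk, xstar - xk1⟫ := by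
    rw [show xk - lam • f' xk - xk1 = (xk - xk1) - lam • f' xk from by abel,
      inner_sub_left, real_inner_smul_left, hq]
  have h2 : ⟪f' xk, xstar - xk1⟫ = b - a := by
    rw [show xstar - xk1 = (xstar - xk) - (xk1 - xk) from by abel,
      inner_sub_right, hb, ha]
  have hsub' : g xk1 + 2 * (c * q) - (b - a) ≤ g xstar := by
    rw [h1, h2] at hsub
    have heq : (1 / lam) * (q - lam * (b - a)) = 2 * (c * q) - (b - a) := by
      rw [hc]; field_simp
    linarith [heq ▸ hsub]
  -- norm identity
  have hqq : ⟪xk - xk1, xk1 - xstar⟫ = -q := by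
    rw [hq, show xk1 - xstar = -(xstar - xk1) from by abel, inner_neg_right]
  have e3 : c * ‖xk - xstar‖ ^ 2
      = c * ‖xk - xk1‖ ^ 2 - 2 * (c * q) + c * ‖xk1 - xstar‖ ^ 2 := by
    rw [show xk - xstar = (xk - xk1) + (xk1 - xstar) from by abel,
      norm_add_sq_real, hqq]
    ring
  subst hF
  simp only
  linarith [hdes', hcvx, hsub', e3]
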